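/- Consider a multi-dimensional knapsack problem with n items having positive real values v_i, positive real weights w_{k,i} (k = 1,…,m), and positive real capacities C_k, with feasible set C := { x ∈ {0,1}^n : Σ_i w_{k,i} x_i ≤ C_k for all k }. Define the edge set E := { (i, j) : i ≠ j, v_i ≤ v_j, w_{k,i} ≥ w_{k,j} for all k, and (if v_i = v_j and w_{k,i} = w_{k,j} for all k, then i < j) }, and let B_n^G := { x ∈ {0,1}^n : for all (i,j) ∈ E, x_i = 1 implies x_j = 1 }. Then max { Σ_i v_i x_i : x ∈ C } = max { Σ_i v_i x_i : x ∈ C ∩ B_n^G } (where both maxima are over nonempty sets, 0 ∈ C ∩ B_n^G). -/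

import Mathlib

open Finset

/-- The set of binary vectors `{0,1}^n`, as real vectors. -/
def Bset (n : ℕ) : Set (Fin n → ℝ) := {x | ∀ i, x i = 0 ∨ x i = 1}

/-- Feasible set of the multi-dimensional knapsack problem:
binary vectors with `∑ i w_{k,i} x_i ≤ C_k` for every `k`. -/
def Kfeas (n m : ℕ) (w : Fin m → Fin n → ℝ) (C : Fin m → ℝ) : Set (Fin n → ℝ) :=
  {x | x ∈ Bset n ∧ ∀ k : Fin m, (∑ i, w k i * x i) ≤ C k}

/-- The order extracted from a multi-dimensional knapsack problem:
`(i,j) ∈ E` iff `i ≠ j`, `v_i ≤ v_j`, `w_{k,i} ≥ w_{k,j}` for all `k`, and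
if the values and all weights coincide then `i < j`. -/
def mkpE (n m : ℕ) (v : Fin n → ℝ) (w : Fin m → Fin n → ℝ) :
    Set (Fin n × Fin n) :=
  {p | p.1 ≠ p.2 ∧ v p.1 ≤ v p.2 ∧ (∀ k : Fin m, w k p.2 ≤ w k p.1) ∧
    ((v p.1 = v p.2 ∧ ∀ k : Fin m, w k p.1 = w k p.2) → p.1 < p.2)}

/-- The subset of `{0,1}^n` ordered by a set `E` of directed edges. -/
def BsetGS (n : ℕ) (E : Set (Fin n × Fin n)) : Set (Fin n → ℝ) :=
  {x | x ∈ Bset n ∧ ∀ e ∈ E, x e.1 = 1 → x e.2 = 1}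

open scoped Classical

section Aux

variable {n m : ℕ} (v : Fin n → ℝ) (w : Fin m → Fin n → ℝ)

lemma mkpE_trans {l i j : Fin n} (h1 : (l, i) ∈ mkpE n m v w)
    (h2 : (i, j) ∈ mkpE n m v w) : (l, j) ∈ mkpE n m v w := by
  obtain ⟨hne1, hv1, hw1, ht1⟩ := h1
  obtain ⟨hne2, hv2, hw2, ht2⟩ := h2
  simp only [mkpE, Set.mem_setOf_eq] at *
  refine ⟨?_, hv1.trans hv2, fun k => (hw2 k).trans (hw1 k), ?_⟩
  · intro hlj
    have hvij : v i = v j := le_antisymm hv2 (hlj ▸ hv1)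
    have hwij : ∀ k, w k i = w k j := fun k => le_antisymm (hlj ▸ hw1 k) (hw2 k)
    have hvli : v l = v i := le_antisymm hv1 (by rw [hlj, ← hvij])
    have hwli : ∀ k, w k l = w k i := fun k =>
      le_antisymm (by rw [hlj, hwij k]) (hw1 k)
    have h1 := ht1 ⟨hvli, hwli⟩
    have h2 := ht2 ⟨hvij, hwij⟩
    exact absurd (h1.trans h2) (by simp [hlj])
  · rintro ⟨hvlj, hwlj⟩
    have hvli : v l = v i := le_antisymm hv1 (hvlj ▸ hv2)
    have hvij : v i = v j := hvli ▸ hvlj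
    have hwli : ∀ k, w k l = w k i :=
      fun k => le_antisymm ((hwlj k) ▸ hw2 k) (hw1 k)
    have hwij : ∀ k, w k i = w k j := fun k => (hwli k) ▸ hwlj k
    exact (ht1 ⟨hvli, hwli⟩).trans (ht2 ⟨hvij, hwij⟩)

/-- Rank: number of `E`-predecessors. -/
noncomputable def rnk (i : Fin n) : ℕ := {l : Fin n | (l, i) ∈ mkpE n m v w}.ncard

lemma rnk_lt {i j : Fin n} (h : (i, j) ∈ mkpE n m v w) :
    rnk v w i < rnk v w j := by
  apply Set.ncard_lt_ncard ?_ (Set.toFinite _)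
  have hsub : {l : Fin n | (l, i) ∈ mkpE n m v w} ⊆ {l : Fin n | (l, j) ∈ mkpE n m v w} := by
    intro l hl
    simp only [Set.mem_setOf_eq] at hl ⊢
    exact mkpE_trans v w hl h
  rw [Set.ssubset_iff_of_subset hsub]
  exact ⟨i, h, fun hc => hc.1 rfl⟩

lemma rnk_le (i : Fin n) : rnk v w i ≤ n := by
  refine le_trans (Set.ncard_le_ncard (Set.subset_univ _) Set.finite_univ) ?_
  simp [Set.ncard_univ]

/-- Potential function. -/
noncomputable def mea (x : Fin n → ℝ) : ℕ := ∑ i, if x i = 1 then rnk v w i else 0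

lemma mea_le (x : Fin n → ℝ) : mea v w x ≤ n * n := by
  calc mea v w x ≤ ∑ _i : Fin n, n := by
        refine Finset.sum_le_sum fun i _ => ?_
        split
        · exact rnk_le v w i
        · exact Nat.zero_le n
    _ = n * n := by simp [Finset.sum_const, mul_comm]

lemma sum_split {M : Type*} [AddCommMonoid M] (g : Fin n → M) {i j : Fin n}
    (hji : j ≠ i) :
    ∑ l, g l = g i + (g j + ∑ l ∈ (univ.erase i).erase j, g l) := by
  rw [← Finset.add_sum_erase _ g (mem_univ i),
      ← Finset.add_sum_erase _ g (Finset.mem_erase.mpr ⟨hji, mem_univ j⟩)]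

lemma key (C : Fin m → ℝ) :
    ∀ K (x : Fin n → ℝ), x ∈ Kfeas n m w C → n * n - mea v w x = K →
      ∃ y ∈ Kfeas n m w C ∩ BsetGS n (mkpE n m v w),
        ∑ i, v i * x i ≤ ∑ i, v i * y i := by
  intro K
  induction K using Nat.strong_induction_on with
  | _ K IH =>
    intro x hx hK
    by_cases hgood : ∀ e ∈ mkpE n m v w, x e.1 = 1 → x e.2 = 1
    · exact ⟨x, ⟨hx, hx.1, hgood⟩, le_refl _⟩
    · push_neg at hgood
      obtain ⟨⟨i, j⟩, he, hei, hej⟩ := hgood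
      have hxj : x j = 0 := (hx.1 j).resolve_right hej
      have hij : i ≠ j := he.1
      have hji : j ≠ i := hij.symm
      set x' : Fin n → ℝ := fun l => if l = i then 0 else if l = j then 1 else x l
        with hx'def
      have hx'i : x' i = 0 := by simp [hx'def]
      have hx'j : x' j = 1 := by simp [hx'def, hji]
      have hagree : ∀ l ∈ (univ.erase i).erase j, x' l = x l := by
        intro l hl
        rw [Finset.mem_erase, Finset.mem_erase] at hl
        simp [hx'def, hl.1, hl.2.1]
      -- splitting sums
      have split' : ∀ g : Fin n → ℝ,
          (∑ l, g l * x' l) = g j + ∑ l ∈ (univ.erase i).erase j, g l * x l := by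
        intro g
        rw [sum_split (fun l => g l * x' l) hji, hx'i, hx'j]
        rw [Finset.sum_congr rfl fun l hl => by rw [hagree l hl]]
        ring_nf
      have splitx : ∀ g : Fin n → ℝ,
          (∑ l, g l * x l) = g i + ∑ l ∈ (univ.erase i).erase j, g l * x l := by
        intro g
        rw [sum_split (fun l => g l * x l) hji, hei, hxj]
        ring_nf
      -- feasibility of x'
      have hB : x' ∈ Bset n := by
        intro l
        by_cases h1 : l = i
        · left; simp [hx'def, h1]
        · by_cases h2 : l = j
          · right; simp [hx'def, h2, hji]
          · simpa [hx'def, h1, h2] using hx.1 l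
      have hfeas : x' ∈ Kfeas n m w C := by
        refine ⟨hB, fun k => ?_⟩
        rw [split' (w k)]
        calc w k j + ∑ l ∈ (univ.erase i).erase j, w k l * x l
            ≤ w k i + ∑ l ∈ (univ.erase i).erase j, w k l * x l := by
              have := he.2.2.1 k; linarith
          _ = ∑ l, w k l * x l := (splitx (w k)).symm
          _ ≤ C k := hx.2 k
      -- value comparison
      have hval : ∑ l, v l * x l ≤ ∑ l, v l * x' l := by
        rw [split' v, splitx v]
        have := he.2.1; linarith
      -- measure strictly increases
      have hmea : mea v w x < mea v w x' := by
        have e1 : mea v w x' = rnk v w j +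
            ∑ l ∈ (univ.erase i).erase j, if x l = 1 then rnk v w l else 0 := by
          rw [mea, sum_split (fun l => if x' l = 1 then rnk v w l else 0) hji,
            hx'i, hx'j]
          rw [Finset.sum_congr rfl fun l hl => by rw [hagree l hl]]
          norm_num
        have e2 : mea v w x = rnk v w i +
            ∑ l ∈ (univ.erase i).erase j, if x l = 1 then rnk v w l else 0 := by
          rw [mea, sum_split (fun l => if x l = 1 then rnk v w l else 0) hji,
            hei, hxj]
          norm_num
        rw [e1, e2]
        exact Nat.add_lt_add_right (rnk_lt v w he) _
      have hlt : n * n - mea v w x' < K := by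
        have h1 := mea_le v w x'
        omega
      obtain ⟨y, hy, hyv⟩ := IH _ hlt x' hfeas rfl
      exact ⟨y, hy, hval.trans hyv⟩

end Aux

theorem stmt17 (n m : ℕ) (v : Fin n → ℝ) (w : Fin m → Fin n → ℝ) (C : Fin m → ℝ)
    (hv : ∀ i, 0 < v i) (hw : ∀ k i, 0 < w k i) (hC : ∀ k, 0 < C k) :
    sSup ((fun x => ∑ i, v i * x i) '' Kfeas n m w C) =
      sSup ((fun x => ∑ i, v i * x i) ''
        (Kfeas n m w C ∩ BsetGS n (mkpE n m v w))) := by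
  set f : (Fin n → ℝ) → ℝ := fun x => ∑ i, v i * x i with hf
  -- finiteness
  have hBfin : (Bset n).Finite := by
    apply Set.Finite.subset
      (Set.finite_range (fun b : Fin n → Bool => fun i => if b i then (1:ℝ) else 0))
    intro x hx
    refine ⟨fun i => if x i = 1 then true else false, funext fun i => ?_⟩
    rcases hx i with h | h <;> simp [h]
  have hKfin : (Kfeas n m w C).Finite := hBfin.subset fun x hx => hx.1
  have hAfin : ((fun x => f x) '' Kfeas n m w C).Finite := hKfin.image _
  have hBsub : (Kfeas n m w C ∩ BsetGS n (mkpE n m v w)) ⊆ Kfeas n m w C :=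
    Set.inter_subset_left
  have hBfin' : ((fun x => f x) ''
      (Kfeas n m w C ∩ BsetGS n (mkpE n m v w))).Finite :=
    (hKfin.subset hBsub).image _
  -- zero is feasible
  have h0K : (0 : Fin n → ℝ) ∈ Kfeas n m w C := by
    refine ⟨fun i => Or.inl rfl, fun k => ?_⟩
    simp only [Pi.zero_apply, mul_zero, Finset.sum_const_zero]
    exact (hC k).le
  have h0B : (0 : Fin n → ℝ) ∈ BsetGS n (mkpE n m v w) :=
    ⟨fun i => Or.inl rfl, fun e _ h1 => absurd h1 (by norm_num)⟩
  have hAne : ((fun x => f x) '' Kfeas n m w C).Nonempty := ⟨f 0, 0, h0K, rfl⟩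
  have hBne : ((fun x => f x) ''
      (Kfeas n m w C ∩ BsetGS n (mkpE n m v w))).Nonempty :=
    ⟨f 0, 0, ⟨h0K, h0B⟩, rfl⟩
  apply le_antisymm
  · apply csSup_le hAne
    rintro a ⟨x, hx, rfl⟩
    obtain ⟨y, hy, hxy⟩ := key v w C (n * n - mea v w x) x hx rfl
    exact hxy.trans (le_csSup hBfin'.bddAbove ⟨y, hy, rfl⟩)
  · exact csSup_le_csSup hAfin.bddAbove hBne
      (Set.image_mono hBsub)
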